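/- For every nondegenerate interval I ⊆ ℝ and every θ ∈ [0,1] there exists a sequence (d_n : I → ℝ)_{n=1}^∞ of continuous functions with 0 ≤ d₁ ≤ d₂ ≤ ⋯ pointwise such that the set I_d := {x ∈ I : lim_{n→∞} d_n(x) = +∞} is nowhere dense in I and dim_H I_d = θ. -/

import Mathlib

open Set Filter Topology MeasureTheory

open scoped ENNReal NNReal

/-- `limSet I f` is the set `I_f = {x ∈ I : lim_{n→∞} f_n(x) = +∞}`. -/
def limSet (I : Set ℝ) (f : ℕ → ℝ → ℝ) : Set ℝ :=
  {x ∈ I | Tendsto (fun n => f n x) atTop atTop}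



noncomputable def gmap (r : ℝ) (ε : ℕ → Bool) : ℝ := ∑' n, cond (ε n) ((1 - r) * r ^ n) 0

section gmap
variable {r : ℝ} (hr0 : 0 < r) (hr1 : r < 1)
include hr0 hr1

lemma gterm_nonneg (ε : ℕ → Bool) (n : ℕ) : 0 ≤ cond (ε n) ((1 - r) * r ^ n) 0 := by
  cases ε n
  · simp
  · simpa using mul_nonneg (by linarith) (pow_nonneg hr0.le n)

lemma gterm_le (ε : ℕ → Bool) (n : ℕ) : cond (ε n) ((1 - r) * r ^ n) 0 ≤ (1 - r) * r ^ n := by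
  cases ε n
  · simpa using mul_nonneg (by linarith) (pow_nonneg hr0.le n)
  · simp

lemma gmap_summable (ε : ℕ → Bool) : Summable (fun n => cond (ε n) ((1 - r) * r ^ n) 0) :=
  Summable.of_nonneg_of_le (gterm_nonneg hr0 hr1 ε) (gterm_le hr0 hr1 ε)
    ((summable_geometric_of_lt_one hr0.le hr1).mul_left _)

lemma tsum_tail_le (ε : ℕ → Bool) (n : ℕ) :
    (∑' k, cond (ε (k + n)) ((1 - r) * r ^ (k + n)) 0) ≤ r ^ n := by
  have hs2 : Summable (fun k => (1 - r) * r ^ (k + n)) := by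
    have : ∀ k, (1 - r) * r ^ (k + n) = ((1 - r) * r ^ n) * r ^ k := fun k => by ring
    exact (funext this : _) ▸ (summable_geometric_of_lt_one hr0.le hr1).mul_left _
  have h1 : (∑' k, cond (ε (k + n)) ((1 - r) * r ^ (k + n)) 0)
      ≤ ∑' k, (1 - r) * r ^ (k + n) :=
    Summable.tsum_le_tsum (fun k => gterm_le hr0 hr1 ε _)
      ((summable_nat_add_iff n).2 (gmap_summable hr0 hr1 ε)) hs2
  refine h1.trans (le_of_eq ?_)
  have : ∀ k, (1 - r) * r ^ (k + n) = ((1 - r) * r ^ n) * r ^ k := fun k => by ring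
  rw [tsum_congr this, tsum_mul_left, tsum_geometric_of_lt_one hr0.le hr1]
  have : 1 - r ≠ 0 := by linarith
  field_simp

/-- `gmap r ε` lies in the level-`n` interval determined by its first `n` digits. -/
lemma gmap_mem_Icc (ε : ℕ → Bool) (n : ℕ) :
    gmap r ε ∈ Icc (∑ k ∈ Finset.range n, cond (ε k) ((1 - r) * r ^ k) 0)
      ((∑ k ∈ Finset.range n, cond (ε k) ((1 - r) * r ^ k) 0) + r ^ n) := by
  have hsum := gmap_summable hr0 hr1 ε
  have hsplit := Summable.sum_add_tsum_nat_add n hsum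
  constructor
  · rw [gmap, ← hsplit]
    have : 0 ≤ ∑' k, cond (ε (k + n)) ((1 - r) * r ^ (k + n)) 0 :=
      tsum_nonneg (fun k => gterm_nonneg hr0 hr1 ε _)
    linarith
  · rw [gmap, ← hsplit]
    have := tsum_tail_le hr0 hr1 ε n
    linarith

lemma gmap_mem_Icc01 (ε : ℕ → Bool) : gmap r ε ∈ Icc (0:ℝ) 1 := by
  simpa using gmap_mem_Icc hr0 hr1 ε 0

end gmap



section gmap
variable {r : ℝ} (hr0 : 0 < r) (hr1 : r < 1)
include hr0 hr1

lemma gmap_close {ε δ : ℕ → Bool} (n : ℕ) (h : ∀ k < n, ε k = δ k) :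
    |gmap r ε - gmap r δ| ≤ r ^ n := by
  have hε := gmap_mem_Icc hr0 hr1 ε n
  have hδ := gmap_mem_Icc hr0 hr1 δ n
  have hS : (∑ k ∈ Finset.range n, cond (ε k) ((1 - r) * r ^ k) 0)
      = ∑ k ∈ Finset.range n, cond (δ k) ((1 - r) * r ^ k) 0 :=
    Finset.sum_congr rfl (fun k hk => by rw [h k (Finset.mem_range.1 hk)])
  rw [abs_le]
  rw [hS] at hε
  constructor <;> [skip; skip] <;>
    · obtain ⟨a1, a2⟩ := hε; obtain ⟨b1, b2⟩ := hδ; linarith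

lemma gmap_sep {ε δ : ℕ → Bool} (n : ℕ) (h : ∀ k < n, ε k = δ k)
    (hε : ε n = true) (hδ : δ n = false) :
    (1 - 2*r) * r ^ n ≤ gmap r ε - gmap r δ := by
  have hεI := gmap_mem_Icc hr0 hr1 ε (n+1)
  have hδI := gmap_mem_Icc hr0 hr1 δ (n+1)
  rw [Finset.sum_range_succ] at hεI hδI
  have hS : (∑ k ∈ Finset.range n, cond (ε k) ((1 - r) * r ^ k) 0)
      = ∑ k ∈ Finset.range n, cond (δ k) ((1 - r) * r ^ k) 0 :=
    Finset.sum_congr rfl (fun k hk => by rw [h k (Finset.mem_range.1 hk)])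
  rw [hε] at hεI; rw [hδ] at hδI
  simp only [cond_true, cond_false] at hεI hδI
  rw [hS] at hεI
  obtain ⟨a1, a2⟩ := hεI; obtain ⟨b1, b2⟩ := hδI
  have : r ^ (n+1) = r * r ^ n := pow_succ' r n
  nlinarith [pow_nonneg hr0.le n]

lemma gmap_injective (hr2 : r < 1/2) : Function.Injective (gmap r) := by
  intro ε δ hgd
  by_contra hne
  have hex : ∃ n, ε n ≠ δ n := by
    by_contra hc; push_neg at hc; exact hne (funext hc)
  classical
  set n := Nat.find hex with hn
  have hdiff : ε n ≠ δ n := Nat.find_spec hex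
  have hagree : ∀ k < n, ε k = δ k := fun k hk => by
    by_contra hc; exact (Nat.find_min hex hk) hc
  have hpos : (0:ℝ) < (1 - 2*r) * r ^ n :=
    mul_pos (by linarith) (pow_pos hr0 n)
  cases hεb : ε n <;> cases hδb : δ n
  · exact hdiff (hεb.trans hδb.symm)
  · have := gmap_sep hr0 hr1 n (fun k hk => (hagree k hk).symm) hδb hεb
    rw [hgd] at this; linarith
  · have := gmap_sep hr0 hr1 n hagree hεb hδb
    rw [hgd] at this; linarith
  · exact hdiff (hεb.trans hδb.symm)

lemma gmap_continuous : Continuous (gmap r) := by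
  apply continuous_tsum (u := fun n => (1 - r) * r ^ n)
  · intro n
    exact (continuous_of_discreteTopology :
      Continuous (fun b : Bool => cond b ((1 - r) * r ^ n) 0)).comp (continuous_apply n)
  · exact (summable_geometric_of_lt_one hr0.le hr1).mul_left _
  · intro n ε
    rw [Real.norm_eq_abs, abs_of_nonneg (gterm_nonneg hr0 hr1 ε n)]
    exact gterm_le hr0 hr1 ε n

lemma isCompact_range_gmap : IsCompact (Set.range (gmap r)) :=
  isCompact_range (gmap_continuous hr0 hr1)

end gmap



noncomputable def greedyS (x : ℝ) : ℕ → ℝ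
  | 0 => 0
  | (n+1) => greedyS x n + (if greedyS x n + (2⁻¹:ℝ)^(n+1) ≤ x then (2⁻¹:ℝ)^(n+1) else 0)

lemma greedyS_invariant {x : ℝ} (hx : x ∈ Icc (0:ℝ) 1) (n : ℕ) :
    greedyS x n ≤ x ∧ x ≤ greedyS x n + (2⁻¹:ℝ)^n := by
  induction n with
  | zero => simpa [greedyS] using hx
  | succ n ih =>
    obtain ⟨h1, h2⟩ := ih
    by_cases h : greedyS x n + (2⁻¹:ℝ)^(n+1) ≤ x
    · constructor
      · simp only [greedyS]; rw [if_pos h]; exact h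
      · simp only [greedyS]; rw [if_pos h]
        have : (2⁻¹:ℝ)^n = 2⁻¹^(n+1) + 2⁻¹^(n+1) := by ring
        linarith
    · constructor
      · simp only [greedyS]; rw [if_neg h]; linarith
      · simp only [greedyS]; rw [if_neg h]; push_neg at h; linarith [h.le]

lemma gmap_half_surj {x : ℝ} (hx : x ∈ Icc (0:ℝ) 1) :
    ∃ ε : ℕ → Bool, gmap 2⁻¹ ε = x := by
  classical
  refine ⟨fun n => decide (greedyS x n + (2⁻¹:ℝ)^(n+1) ≤ x), ?_⟩
  set ε : ℕ → Bool := fun n => decide (greedyS x n + (2⁻¹:ℝ)^(n+1) ≤ x) with hε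
  have hterm : ∀ k, cond (ε k) ((1 - 2⁻¹:ℝ) * 2⁻¹ ^ k) 0
      = (if greedyS x k + (2⁻¹:ℝ)^(k+1) ≤ x then (2⁻¹:ℝ)^(k+1) else 0) := by
    intro k
    by_cases h : greedyS x k + (2⁻¹:ℝ)^(k+1) ≤ x
    · have hk : ε k = true := by rw [hε]; exact decide_eq_true h
      rw [hk, cond_true, if_pos h]; ring
    · have hk : ε k = false := by rw [hε]; exact decide_eq_false h
      rw [hk, cond_false, if_neg h]
  have hpartial : ∀ n, (∑ k ∈ Finset.range n, cond (ε k) ((1 - 2⁻¹:ℝ) * 2⁻¹ ^ k) 0)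
      = greedyS x n := by
    intro n
    induction n with
    | zero => simp [greedyS]
    | succ n ih => rw [Finset.sum_range_succ, ih, hterm n]; rfl
  have hr0 : (0:ℝ) < 2⁻¹ := by norm_num
  have hr1 : (2⁻¹:ℝ) < 1 := by norm_num
  have hsum := gmap_summable hr0 hr1 ε
  have hdist : ∀ n, dist (∑ k ∈ Finset.range n, cond (ε k) ((1 - 2⁻¹:ℝ) * 2⁻¹ ^ k) 0) x
      ≤ (2⁻¹:ℝ)^n := by
    intro n
    rw [hpartial n, Real.dist_eq, abs_le]
    obtain ⟨h1, h2⟩ := greedyS_invariant hx n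
    constructor <;> linarith
  have htend : Tendsto (fun n => ∑ k ∈ Finset.range n, cond (ε k) ((1 - 2⁻¹:ℝ) * 2⁻¹ ^ k) 0)
      atTop (𝓝 x) := by
    rw [tendsto_iff_dist_tendsto_zero]
    exact squeeze_zero (fun n => dist_nonneg) hdist
      (tendsto_pow_atTop_nhds_zero_of_lt_one (by norm_num) (by norm_num))
  rw [gmap]
  exact ((hsum.hasSum_iff_tendsto_nat).2 htend).tsum_eq



section dim
variable {θ r : ℝ} (hθ0 : 0 < θ) (hr0 : 0 < r) (hr2 : r < 1/2) (hrθ : r ^ θ = (2⁻¹:ℝ))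
include hθ0 hr0 hr2 hrθ

lemma pow_rpow_eq (n : ℕ) : (r ^ n) ^ θ = (2⁻¹:ℝ) ^ n := by
  rw [← Real.rpow_natCast r n, ← Real.rpow_mul hr0.le, mul_comm, Real.rpow_mul hr0.le,
    hrθ, Real.rpow_natCast]

lemma cantor_hausdorff_le : μH[θ] (Set.range (gmap r)) ≤ 1 := by
  have hr1 : r < 1 := by linarith
  have hle := MeasureTheory.Measure.hausdorffMeasure_le_liminf_sum (ι := fun n : ℕ => Fin n → Bool) θ
    (Set.range (gmap r)) (fun n => ENNReal.ofReal (r ^ n))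
    (by
      rw [show (0:ℝ≥0∞) = ENNReal.ofReal 0 by simp]
      exact ENNReal.tendsto_ofReal
        (tendsto_pow_atTop_nhds_zero_of_lt_one hr0.le hr1))
    (fun n σ => Icc (∑ k : Fin n, cond (σ k) ((1 - r) * r ^ (k:ℕ)) 0)
      ((∑ k : Fin n, cond (σ k) ((1 - r) * r ^ (k:ℕ)) 0) + r ^ n))
    (Eventually.of_forall (fun n σ => by rw [Real.ediam_Icc]; simp))
    (Eventually.of_forall (fun n => by
      rintro x ⟨ε, rfl⟩
      refine mem_iUnion.2 ⟨fun k => ε k, ?_⟩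
      have := gmap_mem_Icc hr0 hr1 ε n
      rwa [← Fin.sum_univ_eq_sum_range (fun k => cond (ε k) ((1 - r) * r ^ k) 0) n] at this))
  refine hle.trans ?_
  have hval : ∀ n : ℕ, (∑ _σ : Fin n → Bool,
      (EMetric.diam (Icc (∑ k : Fin n, cond (_σ k) ((1 - r) * r ^ (k:ℕ)) 0)
        ((∑ k : Fin n, cond (_σ k) ((1 - r) * r ^ (k:ℕ)) 0) + r ^ n)) ^ θ)) = 1 := by
    intro n
    have hdiam : ∀ σ : Fin n → Bool,
        (EMetric.diam (Icc (∑ k : Fin n, cond (σ k) ((1 - r) * r ^ (k:ℕ)) 0)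
          ((∑ k : Fin n, cond (σ k) ((1 - r) * r ^ (k:ℕ)) 0) + r ^ n)) ^ θ)
        = ENNReal.ofReal ((2:ℝ)⁻¹ ^ n) := by
      intro σ
      rw [show ∀ s : Set ℝ, EMetric.diam s = Metric.ediam s from fun _ => rfl, Real.ediam_Icc]
      simp only [add_sub_cancel_left]
      rw [ENNReal.ofReal_rpow_of_pos (pow_pos hr0 n), pow_rpow_eq hθ0 hr0 hr2 hrθ]
    rw [Finset.sum_congr rfl (fun σ _ => hdiam σ), Finset.sum_const]
    simp only [Finset.card_univ]
    have hcard : Fintype.card (Fin n → Bool) = 2 ^ n := by simp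
    rw [hcard, nsmul_eq_mul]
    push_cast
    rw [ENNReal.ofReal_pow (by norm_num), ENNReal.ofReal_inv_of_pos (by norm_num),
      ENNReal.ofReal_ofNat, ← mul_pow, ENNReal.mul_inv_cancel two_ne_zero ENNReal.ofNat_ne_top,
      one_pow]
  calc _ = liminf (fun _ : ℕ => (1:ℝ≥0∞)) atTop := by
        congr 1; funext n; exact hval n
    _ ≤ 1 := le_of_eq (liminf_const 1)

lemma cantor_dimH_le : dimH (Set.range (gmap r)) ≤ ENNReal.ofReal θ := by
  have h := dimH_le_of_hausdorffMeasure_ne_top (s := Set.range (gmap r)) (d := θ.toNNReal) ?_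
  · exact h
  · rw [Real.coe_toNNReal θ hθ0.le]
    exact ((cantor_hausdorff_le hθ0 hr0 hr2 hrθ).trans_lt ENNReal.one_lt_top).ne

end dim



open scoped Classical in
noncomputable def fH (r : ℝ) (x : ℝ) : ℝ :=
  if h : ∃ ε, gmap r ε = x then gmap 2⁻¹ h.choose else 0

section fH
variable {θ r : ℝ} (hθ0 : 0 < θ) (hr0 : 0 < r) (hr2 : r < 1/2) (hrθ : r ^ θ = (2⁻¹:ℝ))

include hr0 hr2 in
lemma fH_gmap (ε : ℕ → Bool) : fH r (gmap r ε) = gmap 2⁻¹ ε := by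
  have h : ∃ δ, gmap r δ = gmap r ε := ⟨ε, rfl⟩
  rw [fH, dif_pos h, gmap_injective hr0 (by linarith) hr2 h.choose_spec]

include hr0 hr2 in
lemma gmap_sep_abs {ε δ : ℕ → Bool} (n : ℕ) (h : ∀ k < n, ε k = δ k) (hd : ε n ≠ δ n) :
    (1 - 2*r) * r ^ n ≤ |gmap r ε - gmap r δ| := by
  have hr1 : r < 1 := by linarith
  cases hεb : ε n <;> cases hδb : δ n
  · exact absurd (hεb.trans hδb.symm) hd
  · have := gmap_sep hr0 hr1 n (fun k hk => (h k hk).symm) hδb hεb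
    rw [abs_sub_comm]
    exact this.trans (le_abs_self _)
  · exact (gmap_sep hr0 hr1 n h hεb hδb).trans (le_abs_self _)
  · exact absurd (hεb.trans hδb.symm) hd

include hθ0 hr0 hr2 hrθ in
lemma fH_holder : HolderOnWith (Real.toNNReal (((1 - 2*r) ^ θ)⁻¹)) θ.toNNReal (fH r)
    (Set.range (gmap r)) := by
  rintro x ⟨ε, rfl⟩ y ⟨δ, rfl⟩
  by_cases hed : ε = δ
  · subst hed; simp
  rw [fH_gmap hr0 hr2, fH_gmap hr0 hr2]
  have hex : ∃ n, ε n ≠ δ n := by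
    by_contra hc; push_neg at hc; exact hed (funext hc)
  classical
  set n := Nat.find hex
  have hdiff : ε n ≠ δ n := Nat.find_spec hex
  have hagree : ∀ k < n, ε k = δ k := fun k hk => by
    by_contra hc; exact (Nat.find_min hex hk) hc
  have h12r : (0:ℝ) < 1 - 2*r := by linarith
  have h1 : |gmap 2⁻¹ ε - gmap 2⁻¹ δ| ≤ (2⁻¹:ℝ) ^ n :=
    gmap_close (by norm_num) (by norm_num) n hagree
  have h2 : (1 - 2*r) * r ^ n ≤ |gmap r ε - gmap r δ| := gmap_sep_abs hr0 hr2 n hagree hdiff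
  rw [edist_dist, edist_dist, Real.dist_eq, Real.dist_eq]
  have hcoe : ((θ.toNNReal : ℝ≥0) : ℝ) = θ := Real.coe_toNNReal θ hθ0.le
  rw [hcoe]
  have hC : ((Real.toNNReal (((1 - 2*r) ^ θ)⁻¹) : ℝ≥0) : ℝ≥0∞)
      = ENNReal.ofReal (((1 - 2*r) ^ θ)⁻¹) := rfl
  rw [hC]
  have hpos : (0:ℝ) < (1 - 2*r) * r ^ n := mul_pos h12r (pow_pos hr0 n)
  have h3 : ENNReal.ofReal (((1 - 2*r) * r ^ n) ^ θ)
      ≤ ENNReal.ofReal |gmap r ε - gmap r δ| ^ θ := by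
    rw [← ENNReal.ofReal_rpow_of_pos hpos]
    exact ENNReal.rpow_le_rpow (ENNReal.ofReal_le_ofReal h2) hθ0.le
  calc ENNReal.ofReal |gmap 2⁻¹ ε - gmap 2⁻¹ δ| ≤ ENNReal.ofReal ((2⁻¹:ℝ) ^ n) :=
        ENNReal.ofReal_le_ofReal h1
    _ = ENNReal.ofReal (((1 - 2*r) ^ θ)⁻¹ * ((1 - 2*r) * r ^ n) ^ θ) := by
        congr 1
        rw [Real.mul_rpow h12r.le (pow_pos hr0 n).le, ← mul_assoc,
          inv_mul_cancel₀ (ne_of_gt (Real.rpow_pos_of_pos h12r θ)), one_mul,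
          pow_rpow_eq hθ0 hr0 hr2 hrθ]
    _ = ENNReal.ofReal (((1 - 2*r) ^ θ)⁻¹) * ENNReal.ofReal (((1 - 2*r) * r ^ n) ^ θ) :=
        ENNReal.ofReal_mul (by positivity)
    _ ≤ _ := mul_le_mul_right h3 _

include hr0 hr2 in
lemma fH_surj : Icc (0:ℝ) 1 ⊆ fH r '' (Set.range (gmap r)) := by
  intro z hz
  obtain ⟨ε, hε⟩ := gmap_half_surj hz
  exact ⟨gmap r ε, ⟨ε, rfl⟩, by rw [fH_gmap hr0 hr2, hε]⟩

include hθ0 hr0 hr2 hrθ in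
lemma cantor_dimH_ge : ENNReal.ofReal θ ≤ dimH (Set.range (gmap r)) := by
  have hdimIcc : dimH (Icc (0:ℝ) 1) = 1 := by
    rw [Real.dimH_of_mem_nhds (Icc_mem_nhds (show (0:ℝ) < 2⁻¹ by norm_num)
      (show (2⁻¹:ℝ) < 1 by norm_num))]
    simp
  have hθnn : (0:ℝ≥0) < θ.toNNReal := Real.toNNReal_pos.2 hθ0
  have h2 := (fH_holder hθ0 hr0 hr2 hrθ).dimH_image_le hθnn
  have h3 : (1:ℝ≥0∞) ≤ dimH (fH r '' (Set.range (gmap r))) := by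
    rw [← hdimIcc]; exact dimH_mono (fH_surj hr0 hr2)
  have h4 : (1:ℝ≥0∞) ≤ dimH (Set.range (gmap r)) / (θ.toNNReal : ℝ≥0∞) := h3.trans h2
  rw [ENNReal.le_div_iff_mul_le (Or.inl (by exact_mod_cast hθnn.ne'))
    (Or.inl ENNReal.coe_ne_top), one_mul] at h4
  exact h4

end fH



lemma lipschitz_affine (a c : ℝ) : LipschitzWith (Real.nnabs c) (fun x : ℝ => a + c * x) := by
  apply LipschitzWith.of_dist_le_mul
  intro x y
  rw [Real.dist_eq, Real.dist_eq]
  have : a + c * x - (a + c * y) = c * (x - y) := by ring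
  rw [this, abs_mul]
  simp [Real.coe_nnabs]

lemma dimH_affine_image (a c : ℝ) (hc : c ≠ 0) (s : Set ℝ) :
    dimH ((fun x => a + c * x) '' s) = dimH s := by
  refine le_antisymm ((lipschitz_affine a c).dimH_image_le s) ?_
  have h : (fun y : ℝ => -a/c + c⁻¹ * y) '' ((fun x : ℝ => a + c * x) '' s) = s := by
    rw [Set.image_image]
    have : ∀ x : ℝ, -a/c + c⁻¹ * (a + c * x) = x := fun x => by field_simp; ring
    simp only [this, Set.image_id']
  calc dimH s = dimH ((fun y : ℝ => -a/c + c⁻¹ * y) '' ((fun x : ℝ => a + c * x) '' s)) := by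
        rw [h]
    _ ≤ dimH ((fun x : ℝ => a + c * x) '' s) := (lipschitz_affine _ _).dimH_image_le _

/-- Key construction: in any nondegenerate closed interval there is a compact nonempty
null set of Hausdorff dimension exactly `θ`, for `θ ∈ (0,1)`. -/
lemma exists_cantor_like {a b θ : ℝ} (hab : a < b) (hθ0 : 0 < θ) (hθ1 : θ < 1) :
    ∃ E : Set ℝ, E ⊆ Icc a b ∧ E.Nonempty ∧ IsClosed E ∧ volume E = 0 ∧
      dimH E = ENNReal.ofReal θ := by
  set r : ℝ := (2:ℝ) ^ (-θ⁻¹) with hrdef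
  have hr0 : 0 < r := Real.rpow_pos_of_pos (by norm_num) _
  have hr2 : r < 1/2 := by
    have h1 : (1:ℝ) < θ⁻¹ := (one_lt_inv₀ hθ0).2 hθ1
    have := (Real.rpow_lt_rpow_left_iff (x := 2) (by norm_num)).2 (by linarith : -θ⁻¹ < -1)
    calc r < (2:ℝ) ^ (-1 : ℝ) := this
      _ = 1/2 := by rw [Real.rpow_neg_one]; norm_num
  have hrθ : r ^ θ = (2⁻¹:ℝ) := by
    rw [hrdef, ← Real.rpow_mul (by norm_num : (0:ℝ) ≤ 2), neg_mul,
      inv_mul_cancel₀ hθ0.ne', Real.rpow_neg_one]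
  have hr1 : r < 1 := by linarith
  have hba : (0:ℝ) < b - a := by linarith
  refine ⟨(fun x => a + (b - a) * x) '' (Set.range (gmap r)), ?_, ?_, ?_, ?_, ?_⟩
  case _ =>
    rintro _ ⟨y, ⟨ε, rfl⟩, rfl⟩
    obtain ⟨h1, h2⟩ := gmap_mem_Icc01 hr0 hr1 ε
    refine ⟨by simp; nlinarith, by simp; nlinarith⟩
  case _ => exact ⟨_, ⟨gmap r (fun _ => false), ⟨fun _ => false, rfl⟩, rfl⟩⟩
  case _ =>
    exact ((isCompact_range_gmap hr0 hr1).image (by fun_prop)).isClosed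
  case _ =>
    have hdim : dimH ((fun x => a + (b - a) * x) '' (Set.range (gmap r)))
        = ENNReal.ofReal θ := by
      rw [dimH_affine_image a (b - a) hba.ne']
      exact le_antisymm (cantor_dimH_le hθ0 hr0 hr2 hrθ) (cantor_dimH_ge hθ0 hr0 hr2 hrθ)
    have hlt : dimH ((fun x => a + (b - a) * x) '' (Set.range (gmap r)))
        < ((1:ℝ≥0) : ℝ≥0∞) := by
      rw [hdim]
      exact_mod_cast ENNReal.ofReal_lt_one.2 hθ1
    have h0 := hausdorffMeasure_of_dimH_lt hlt
    rw [← hausdorffMeasure_real]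
    simpa using h0
  case _ =>
    rw [dimH_affine_image a (b - a) hba.ne']
    exact le_antisymm (cantor_dimH_le hθ0 hr0 hr2 hrθ) (cantor_dimH_ge hθ0 hr0 hr2 hrθ)





lemma exists_Icc_subset {I : Set ℝ} (hI : I.OrdConnected) {x y δ : ℝ}
    (hx : x ∈ I) (hy : y ∈ I) (hxy : y ≠ x) (hδ : 0 < δ) :
    ∃ u v : ℝ, u < v ∧ Icc u v ⊆ Metric.ball x δ ∩ I := by
  rcases lt_or_gt_of_ne hxy with h | h
  · -- y < x
    refine ⟨max (x - δ/2) y, x, by simp [h]; linarith, fun z hz => ?_⟩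
    obtain ⟨h1, h2⟩ := hz
    constructor
    · rw [Metric.mem_ball, Real.dist_eq, abs_lt]
      have := le_max_left (x - δ/2) y
      constructor <;> linarith
    · have hw : max (x - δ/2) y ∈ I := by
        rcases max_cases (x - δ/2) y with ⟨he, hle⟩ | ⟨he, hle⟩
        · rw [he]; exact hI.out hy hx ⟨by linarith, by linarith⟩
        · rw [he]; exact hy
      exact hI.out hw hx ⟨h1, h2⟩
  · -- x < y
    refine ⟨x, min (x + δ/2) y, by simp [h]; linarith, fun z hz => ?_⟩
    obtain ⟨h1, h2⟩ := hz
    have hm : min (x + δ/2) y ≤ x + δ/2 := min_le_left _ _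
    constructor
    · rw [Metric.mem_ball, Real.dist_eq, abs_lt]
      constructor <;> linarith
    · have hw : min (x + δ/2) y ∈ I := by
        rcases min_cases (x + δ/2) y with ⟨he, hle⟩ | ⟨he, hle⟩
        · rw [he]; exact hI.out hx hy ⟨by linarith, by linarith⟩
        · rw [he]; exact hy
      exact hI.out hx hw ⟨h1, h2⟩

lemma main_aux (I : Set ℝ) (hI : I.OrdConnected) (hInt : I.Nontrivial)
    (E : Set ℝ) (hEI : E ⊆ I) (hEne : E.Nonempty) (hEc : IsClosed E) (hEvol : volume E = 0) :
    ∃ d : ℕ → ℝ → ℝ, (∀ n, ContinuousOn (d n) I) ∧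
      (∀ x ∈ I, 0 ≤ d 0 x) ∧
      (∀ n, ∀ x ∈ I, d n x ≤ d (n + 1) x) ∧
      IsNowhereDense ((Subtype.val ⁻¹' limSet I d : Set I)) ∧
      limSet I d = E := by
  set d : ℕ → ℝ → ℝ := fun n x => n / (1 + n * Metric.infDist x E) with hd
  have hden : ∀ (n : ℕ) (x : ℝ), (0:ℝ) < 1 + n * Metric.infDist x E := by
    intro n x
    have := Metric.infDist_nonneg (x := x) (s := E)
    positivity
  have hlim : limSet I d = E := by
    ext x
    constructor
    · rintro ⟨hxI, htend⟩
      by_contra hxE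
      have hpos : 0 < Metric.infDist x E := (hEc.notMem_iff_infDist_pos hEne).1 hxE
      have hbd : ∀ n : ℕ, d n x ≤ (Metric.infDist x E)⁻¹ := by
        intro n
        rw [hd]
        rw [div_le_iff₀ (hden n x)]
        rw [inv_mul_eq_div, le_div_iff₀ hpos]
        have := Metric.infDist_nonneg (x := x) (s := E)
        nlinarith
      obtain ⟨n, hn⟩ := (tendsto_atTop.1 htend ((Metric.infDist x E)⁻¹ + 1)).exists
      have := hbd n
      linarith
    · intro hxE
      refine ⟨hEI hxE, ?_⟩
      have : ∀ n : ℕ, d n x = n := by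
        intro n
        rw [hd]
        simp [Metric.infDist_zero_of_mem hxE]
      rw [show (fun n => d n x) = (fun n : ℕ => (n:ℝ)) from funext this]
      exact tendsto_natCast_atTop_atTop
  refine ⟨d, ?_, ?_, ?_, ?_, hlim⟩
  · intro n
    apply ContinuousOn.mono (s := univ) _ (subset_univ I)
    apply Continuous.continuousOn
    exact continuous_const.div (continuous_const.add (continuous_const.mul (Metric.continuous_infDist_pt E))) (fun x => (hden n x).ne')
  · intro x _; simp [hd]
  · intro n x _
    rw [hd, div_le_div_iff₀ (hden n x) (hden (n+1) x)]
    have h0 := Metric.infDist_nonneg (x := x) (s := E)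
    push_cast
    nlinarith
  · rw [hlim]
    have hclosed : IsClosed (Subtype.val ⁻¹' E : Set I) := hEc.preimage continuous_subtype_val
    rw [hclosed.isNowhereDense_iff]
    by_contra hne
    obtain ⟨x, hx⟩ := nonempty_iff_ne_empty.2 hne
    obtain ⟨t, hts, hto, hxt⟩ := mem_interior.1 hx
    obtain ⟨U, hUo, hUt⟩ := isOpen_induced_iff.1 hto
    obtain ⟨δ, hδ0, hball⟩ := Metric.isOpen_iff.1 hUo x (by rw [← hUt] at hxt; exact hxt)
    -- find y ∈ I distinct from x
    obtain ⟨p, hp, q, hq, hpq⟩ := hInt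
    have hxI : (x:ℝ) ∈ I := x.2
    obtain ⟨y, hy, hyx⟩ : ∃ y ∈ I, y ≠ (x:ℝ) := by
      by_cases hpx : p = (x:ℝ)
      · exact ⟨q, hq, fun hc => hpq (by rw [hpx, hc])⟩
      · exact ⟨p, hp, hpx⟩
    obtain ⟨u, v, huv, hsub⟩ := exists_Icc_subset hI hxI hy hyx hδ0
    have hIccE : Icc u v ⊆ E := by
      intro z hz
      obtain ⟨hz1, hz2⟩ := hsub hz
      have hzU : z ∈ U := hball hz1
      have : (⟨z, hz2⟩ : I) ∈ Subtype.val ⁻¹' E := hts (by rw [← hUt]; exact hzU)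
      exact this
    have : volume (Icc u v) ≤ volume E := measure_mono hIccE
    rw [hEvol, Real.volume_Icc] at this
    simp only [nonpos_iff_eq_zero, ENNReal.ofReal_eq_zero] at this
    linarith



lemma exists_E_one {a b : ℝ} (hab : a < b) :
    ∃ E : Set ℝ, E ⊆ Icc a b ∧ E.Nonempty ∧ IsClosed E ∧ volume E = 0 ∧
      dimH E = 1 := by
  set m : ℕ → ℝ := fun k => b - (b - a) * (2⁻¹:ℝ)^k with hm
  have hba : (0:ℝ) < b - a := by linarith
  have hmlt : ∀ k, m k < m (k+1) := by
    intro k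
    simp only [hm]
    have : (2⁻¹:ℝ)^(k+1) < (2⁻¹:ℝ)^k := by
      apply pow_lt_pow_right_of_lt_one₀ <;> norm_num
    nlinarith
  have hmmono : Monotone m := monotone_nat_of_le_succ (fun k => (hmlt k).le)
  have hma : ∀ k, a ≤ m k := by
    intro k
    simp only [hm]
    have h1 : (2⁻¹:ℝ)^k ≤ 1 := pow_le_one₀ (by norm_num) (by norm_num)
    nlinarith
  have hmb : ∀ k, m k ≤ b := by
    intro k
    simp only [hm]
    have : (0:ℝ) < (2⁻¹:ℝ)^k := by positivity
    nlinarith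
  set θk : ℕ → ℝ := fun k => ((k:ℝ)+1)/((k:ℝ)+2) with hθk
  have hθk0 : ∀ k, 0 < θk k := fun k => by positivity
  have hθk1 : ∀ k, θk k < 1 := fun k => by
    rw [hθk, div_lt_one (by positivity)]; linarith
  have hEk := fun k => exists_cantor_like (hmlt k) (hθk0 k) (hθk1 k)
  choose Ek hEksub hEkne hEkcl hEkvol hEkdim using hEk
  set F := ⋃ k, Ek k with hF
  have hFIcc : F ⊆ Icc a b := by
    rintro x hx
    obtain ⟨k, hk⟩ := mem_iUnion.1 hx
    obtain ⟨h1, h2⟩ := hEksub k hk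
    exact ⟨(hma k).trans h1, h2.trans (hmb (k+1))⟩
  refine ⟨closure F, ?_, ?_, isClosed_closure, ?_, ?_⟩
  · exact closure_minimal hFIcc isClosed_Icc
  · obtain ⟨x, hx⟩ := hEkne 0
    exact ⟨x, subset_closure (mem_iUnion.2 ⟨0, hx⟩)⟩
  · -- volume zero, via closure F ⊆ F ∪ {b}
    have hsub : closure F ⊆ F ∪ {b} := by
      intro x hx
      by_cases hxb : x = b
      · exact Or.inr (by simp [hxb])
      have hxab : x ∈ Icc a b := closure_minimal hFIcc isClosed_Icc hx
      have hxlt : x < b := lt_of_le_of_ne hxab.2 hxb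
      obtain ⟨K, hK⟩ : ∃ K : ℕ, (b - a) * (2⁻¹:ℝ)^K < b - x := by
        obtain ⟨K, hK⟩ := exists_pow_lt_of_lt_one
          (div_pos (by linarith : (0:ℝ) < b - x) hba) (by norm_num : (2⁻¹:ℝ) < 1)
        refine ⟨K, ?_⟩
        rw [lt_div_iff₀ hba] at hK
        linarith [hK]
      have hxm : x < m K := by simp only [hm]; linarith
      have hclosed : IsClosed ((⋃ k ∈ Finset.range K, Ek k) ∪ Icc (m K) b) :=
        (isClosed_biUnion_finset (fun k _ => hEkcl k)).union isClosed_Icc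
      have hFsub : F ⊆ (⋃ k ∈ Finset.range K, Ek k) ∪ Icc (m K) b := by
        rintro z hz
        obtain ⟨k, hk⟩ := mem_iUnion.1 hz
        by_cases hkK : k < K
        · exact Or.inl (mem_iUnion₂.2 ⟨k, Finset.mem_range.2 hkK, hk⟩)
        · push_neg at hkK
          obtain ⟨h1, h2⟩ := hEksub k hk
          exact Or.inr ⟨(hmmono hkK).trans h1, h2.trans (hmb (k+1))⟩
      have := closure_minimal hFsub hclosed hx
      rcases this with h | h
      · obtain ⟨k, _, hk⟩ := mem_iUnion₂.1 h
        exact Or.inl (mem_iUnion.2 ⟨k, hk⟩)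
      · exact absurd h.1 (not_le.2 hxm)
    have h0 : volume (F ∪ {b}) = 0 := by
      apply measure_union_null
      · exact measure_iUnion_null (fun k => hEkvol k)
      · exact Real.volume_singleton
    exact le_antisymm (h0 ▸ measure_mono hsub) zero_le
  · -- dimension 1
    refine le_antisymm ?_ ?_
    · calc dimH (closure F) ≤ dimH (univ : Set ℝ) := dimH_mono (subset_univ _)
        _ = 1 := Real.dimH_univ
    · have hle : ∀ k, ENNReal.ofReal (θk k) ≤ dimH (closure F) := by
        intro k
        rw [← hEkdim k]
        exact dimH_mono ((subset_iUnion Ek k).trans subset_closure)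
      have htend : Tendsto (fun k => ENNReal.ofReal (θk k)) atTop (𝓝 1) := by
        have h1 : Tendsto θk atTop (𝓝 1) := by
          have h2 : Tendsto (fun k : ℕ => ((k:ℝ)+2)⁻¹) atTop (𝓝 0) :=
            tendsto_inv_atTop_zero.comp
              (tendsto_atTop_add_const_right _ 2 tendsto_natCast_atTop_atTop)
          have h3 : θk = fun k : ℕ => 1 - ((k:ℝ)+2)⁻¹ := by
            funext k
            rw [hθk]
            have : ((k:ℝ)+2) ≠ 0 := by positivity
            field_simp
            ring
          have h4 := (tendsto_const_nhds (x := (1:ℝ)) (f := atTop)).sub h2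
          rw [sub_zero] at h4
          rwa [h3]
        have h5 := ENNReal.tendsto_ofReal h1
        simpa using h5
      exact le_of_tendsto htend (Eventually.of_forall hle)


/-- For every nondegenerate interval `I` and every `θ ∈ [0,1]` there is a sequence
`0 ≤ d₁ ≤ d₂ ≤ ⋯` of continuous functions on `I` such that `I_d` is nowhere dense in `I`
and `dim_H I_d = θ`. -/
theorem stmt_11 (I : Set ℝ) (hI : I.OrdConnected) (hInt : I.Nontrivial)
    (θ : ℝ) (hθ : θ ∈ Icc (0 : ℝ) 1) :
    ∃ d : ℕ → ℝ → ℝ, (∀ n, ContinuousOn (d n) I) ∧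
      (∀ x ∈ I, 0 ≤ d 0 x) ∧
      (∀ n, ∀ x ∈ I, d n x ≤ d (n + 1) x) ∧
      IsNowhereDense ((Subtype.val ⁻¹' limSet I d : Set I)) ∧
      dimH (limSet I d) = ENNReal.ofReal θ := by
  obtain ⟨p, hp, q, hq, hpq⟩ := hInt
  set a := min p q with ha
  set b := max p q with hb
  have hab : a < b := min_lt_max.2 hpq
  have haI : a ∈ I := by rcases min_cases p q with ⟨h, _⟩ | ⟨h, _⟩ <;> rw [ha, h] <;> assumption
  have hbI : b ∈ I := by rcases max_cases p q with ⟨h, _⟩ | ⟨h, _⟩ <;> rw [hb, h] <;> assumption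
  have hIccI : Icc a b ⊆ I := fun z hz => hI.out haI hbI hz
  -- get E with all the properties
  obtain ⟨E, hEI, hEne, hEc, hEvol, hEdim⟩ :
      ∃ E : Set ℝ, E ⊆ I ∧ E.Nonempty ∧ IsClosed E ∧ volume E = 0 ∧
        dimH E = ENNReal.ofReal θ := by
    rcases eq_or_lt_of_le hθ.1 with hθ0 | hθ0
    · refine ⟨{a}, by simpa using haI, singleton_nonempty a, isClosed_singleton,
        Real.volume_singleton, ?_⟩
      rw [dimH_singleton, ← hθ0]
      simp
    rcases eq_or_lt_of_le hθ.2 with hθ1 | hθ1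
    · obtain ⟨E, hE1, hE2, hE3, hE4, hE5⟩ := exists_E_one hab
      exact ⟨E, hE1.trans hIccI, hE2, hE3, hE4, by rw [hE5, hθ1]; simp⟩
    · obtain ⟨E, hE1, hE2, hE3, hE4, hE5⟩ := exists_cantor_like hab hθ0 hθ1
      exact ⟨E, hE1.trans hIccI, hE2, hE3, hE4, hE5⟩
  obtain ⟨d, h1, h2, h3, h4, h5⟩ := main_aux I hI ⟨p, hp, q, hq, hpq⟩ E hEI hEne hEc hEvol
  exact ⟨d, h1, h2, h3, h4, by rw [h5, hEdim]⟩
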